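/- Every triangulation on the sphere obtained from K_4 by a nonempty sequence of 3-vertex additions has at least two vertices of degree 3. -/

import Mathlib

open SimpleGraph

/-- `H` is a minor of `G`: disjoint nonempty connected branch sets with edges
between the branch sets of adjacent vertices of `H`. -/
def GraphMinor {W V : Type} (H : SimpleGraph W) (G : SimpleGraph V) : Prop :=
  ∃ f : W → Set V,
    (∀ w, (f w).Nonempty) ∧
    (∀ w, (G.induce (f w)).Connected) ∧
    (∀ w w', w ≠ w' → Disjoint (f w) (f w')) ∧
    (∀ w w', H.Adj w w' → ∃ x ∈ f w, ∃ y ∈ f w', G.Adj x y)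

/-- A graph is planar iff it has no `K₅` minor and no `K_{3,3}` minor (Wagner's theorem). -/
def IsPlanar {V : Type} (G : SimpleGraph V) : Prop :=
  ¬ GraphMinor (completeGraph (Fin 5)) G ∧
  ¬ GraphMinor (completeBipartiteGraph (Fin 3) (Fin 3)) G

/-- A triangulation on the sphere: a maximal planar graph with at least 4 vertices. -/
def IsSphereTriangulation {V : Type} (T : SimpleGraph V) : Prop :=
  4 ≤ Nat.card V ∧ IsPlanar T ∧
    ∀ u v : V, u ≠ v → ¬ T.Adj u v →
      ¬ IsPlanar (T ⊔ SimpleGraph.fromRel (fun a b => a = u ∧ b = v))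

/-- Stacked triangulations: graphs obtained from `K₄` by a sequence of 3-vertex
additions (adding a new vertex inside a face and joining it to the three
boundary vertices; planarity of the result forces the triangle to bound a face). -/
inductive IsStacked : {V : Type} → SimpleGraph V → Prop
  | base {V : Type} (G : SimpleGraph V) (h : Nonempty (G ≃g completeGraph (Fin 4))) :
      IsStacked G
  | step {V : Type} (G : SimpleGraph V) (v : V)
      (hpl : IsPlanar G)
      (hdeg : (G.neighborSet v).ncard = 3)
      (htri : G.IsClique (G.neighborSet v))
      (hrest : IsStacked (G.induce {w | w ≠ v})) : IsStacked G


private lemma card_compl_ne' {V : Type} [Finite V] (v : V) :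
    Nat.card ↥{w : V | w ≠ v} + 1 = Nat.card V := by
  classical
  rw [← Finite.card_option]
  exact Nat.card_congr (Equiv.optionSubtypeNe v)

private lemma induce_adj' {V : Type} {G : SimpleGraph V} {s : Set V} (a b : s) :
    (G.induce s).Adj a b ↔ G.Adj ↑a ↑b := by
  simp [comap_adj]

private lemma induce_nbhd_ncard {V : Type} {G : SimpleGraph V} {s : Set V} (a : s) :
    ((G.induce s).neighborSet a).ncard = (s ∩ G.neighborSet ↑a).ncard := by
  have himg : Subtype.val '' ((G.induce s).neighborSet a) = s ∩ G.neighborSet ↑a := by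
    ext x
    simp only [Set.mem_image, mem_neighborSet, Set.mem_inter_iff]
    constructor
    · rintro ⟨b, hb, rfl⟩
      exact ⟨b.2, ((induce_adj' a b).mp hb)⟩
    · rintro ⟨hxs, hadj⟩
      exact ⟨⟨x, hxs⟩, (induce_adj' a ⟨x, hxs⟩).mpr hadj, rfl⟩
  rw [← himg, Set.ncard_image_of_injective _ Subtype.val_injective]

private lemma stacked_card_ge {V : Type} {G : SimpleGraph V} (h : IsStacked G) :
    4 ≤ Nat.card V := by
  induction h with
  | base G h =>
      obtain ⟨e⟩ := h
      rw [Nat.card_congr e.toEquiv]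
      simp
  | step G v hpl hdeg htri hrest ih =>
      rename_i W
      have hfin : Finite ↥{w : W | w ≠ v} := Nat.finite_of_card_ne_zero (by omega)
      haveI : Fintype {b : W // b ≠ v} := @Fintype.ofFinite _ hfin
      have hfinV : Finite W := by
        classical
        exact Finite.of_equiv _ (Equiv.optionSubtypeNe v)
      have := card_compl_ne' v
      omega

private lemma stacked_complete {V : Type} {G : SimpleGraph V} (h : IsStacked G)
    (hc : Nat.card V = 4) : ∀ x y : V, x ≠ y → G.Adj x y := by
  induction h with
  | base G h =>
      obtain ⟨e⟩ := h
      intro x y hxy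
      have : (completeGraph (Fin 4)).Adj (e x) (e y) := by
        simpa [completeGraph] using fun hc => hxy (e.toEquiv.injective hc)
      exact e.map_adj_iff.mp this
  | step G v hpl hdeg htri hrest ihd =>
      rename_i W
      have h4 := stacked_card_ge hrest
      have hfinV : Finite W := Nat.finite_of_card_ne_zero (by omega)
      have := card_compl_ne' v
      omega

private lemma stacked_aux {V : Type} {G : SimpleGraph V} (h : IsStacked G) :
    5 ≤ Nat.card V →
    ∃ x y : V, x ≠ y ∧ ¬ G.Adj x y ∧
      (G.neighborSet x).ncard = 3 ∧ (G.neighborSet y).ncard = 3 := by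
  induction h with
  | base G h =>
      intro h5
      obtain ⟨e⟩ := h
      rw [Nat.card_congr e.toEquiv] at h5
      simp at h5
  | step G v hpl hdeg htri hrest ih =>
      rename_i W
      intro h5
      set s : Set W := {w | w ≠ v} with hs
      have hfinV : Finite W := Nat.finite_of_card_ne_zero (by omega)
      have hcard : Nat.card ↥s + 1 = Nat.card W := card_compl_ne' v
      -- lifting neighbor counts for vertices not adjacent to v
      have hlift : ∀ z : ↥s, ¬ G.Adj v ↑z →
          (G.neighborSet ↑z).ncard = ((G.induce s).neighborSet z).ncard := by
        intro z hz
        rw [induce_nbhd_ncard]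
        congr 1
        rw [Set.inter_eq_self_of_subset_right]
        intro w hw
        intro hwv
        exact hz (hwv ▸ hw.symm)
      by_cases h6 : 6 ≤ Nat.card W
      · -- inductive case
        obtain ⟨x, y, hxy, hnadj, hx3, hy3⟩ := ih (by omega)
        have hnadj' : ¬ G.Adj ↑x ↑y := fun hadj => hnadj ((induce_adj' x y).mpr hadj)
        have hone : ¬ G.Adj v ↑x ∨ ¬ G.Adj v ↑y := by
          by_contra hcon
          push_neg at hcon
          exact hnadj' (htri hcon.1 hcon.2 (fun hc => hxy (Subtype.val_injective hc)))
        rcases hone with hnx | hny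
        · exact ⟨v, ↑x, fun hc => x.2 hc.symm, hnx, hdeg, (hlift x hnx).trans hx3⟩
        · exact ⟨v, ↑y, fun hc => y.2 hc.symm, hny, hdeg, (hlift y hny).trans hy3⟩
      · -- base: exactly 5 vertices, induced graph is K4
        have hc5 : Nat.card W = 5 := by omega
        have hcomp := stacked_complete hrest (by omega)
        have hsncard : s.ncard = 4 := by
          rw [← Nat.card_coe_set_eq]; omega
        -- find u ∈ s not adjacent to v
        have hnsub : ¬ s ⊆ G.neighborSet v := by
          intro hsub
          have := Set.ncard_le_ncard hsub (Set.toFinite _)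
          omega
        obtain ⟨u, hus, hunadj⟩ := Set.not_subset.mp hnsub
        rw [mem_neighborSet] at hunadj
        have huv : u ≠ v := hus
        -- neighbors of u are exactly everything except u and v
        have hNu : G.neighborSet u = ({u, v} : Set W)ᶜ := by
          ext w
          simp only [mem_neighborSet, Set.mem_compl_iff, Set.mem_insert_iff,
            Set.mem_singleton_iff, not_or]
          constructor
          · intro hadj
            refine ⟨fun hc => G.irrefl (hc ▸ hadj), fun hc => ?_⟩
            exact hunadj (G.adj_symm (hc ▸ hadj))
          · rintro ⟨hwu, hwv⟩
            have := hcomp ⟨u, hus⟩ ⟨w, hwv⟩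
              (fun hc => hwu (congrArg Subtype.val hc.symm))
            exact (induce_adj' (⟨u, hus⟩ : ↥s) ⟨w, hwv⟩).mp this
        have hNu3 : (G.neighborSet u).ncard = 3 := by
          rw [hNu]
          have hpair : ({u, v} : Set W).ncard = 2 := Set.ncard_pair huv
          have := Set.ncard_add_ncard_compl ({u, v} : Set W)
          omega
        exact ⟨v, u, Ne.symm huv, hunadj, hdeg, hNu3⟩

/-- Every triangulation obtained from `K₄` by a nonempty sequence of 3-vertex
additions (equivalently, a stacked triangulation with at least 5 vertices)
has at least two vertices of degree 3. -/
theorem stacked_two_degree_three_vertices {V : Type} [Fintype V] [DecidableEq V]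
    (T : SimpleGraph V) [DecidableRel T.Adj]
    (hT : IsStacked T) (h5 : 5 ≤ Nat.card V) :
    ∃ x y : V, x ≠ y ∧ T.degree x = 3 ∧ T.degree y = 3 := by
  obtain ⟨x, y, hxy, _, hx, hy⟩ := stacked_aux hT h5
  have hdeg : ∀ z : V, T.degree z = (T.neighborSet z).ncard := by
    intro z
    rw [← card_neighborFinset_eq_degree, neighborFinset_def,
      Set.ncard_eq_toFinset_card']
  exact ⟨x, y, hxy, (hdeg x).trans hx, (hdeg y).trans hy⟩
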